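/- If T⁺ ≥ 1 satisfies T⁺ - 1 - ln T⁺ = h for some h ≥ 0, then T⁺ ≤ 1 + √(2h) + h. -/

import Mathlib

open Real

lemma g_strictMono : StrictMonoOn (fun x : ℝ => x - 1 - Real.log x) (Set.Ici 1) := by
  have : ∀ x ∈ interior (Set.Ici (1:ℝ)), 0 < deriv (fun x : ℝ => x - 1 - Real.log x) x := by
    intro x hx
    rw [interior_Ici] at hx
    have hx1 : (1:ℝ) < x := hx
    have hx0 : x ≠ 0 := by positivity
    have : deriv (fun x : ℝ => x - 1 - Real.log x) x = 1 - 1/x := by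
      have h1 : HasDerivAt (fun x : ℝ => x - 1 - Real.log x) (1 - 1/x) x := by
        have := (Real.hasDerivAt_log hx0)
        have h2 := ((hasDerivAt_id x).sub_const 1).sub this
        rw [one_div]; exact h2
      exact h1.deriv
    rw [this]
    have : 1/x < 1 := by rw [div_lt_one (by linarith)]; linarith
    linarith
  exact StrictMonoOn.mono (strictMonoOn_of_deriv_pos (convex_Ici 1)
    (by
      apply ContinuousOn.sub (by fun_prop)
      apply ContinuousOn.log continuousOn_id
      intro x hx; exact by simp at hx ⊢; linarith) this) le_rfl

lemma log_bound (s : ℝ) (hs : 0 ≤ s) : Real.log (1 + s + s^2/2) ≤ s := by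
  have hexp : 1 + s + s^2/2 ≤ Real.exp s := by
    have := Real.sum_le_exp_of_nonneg hs 3
    simp [Finset.sum_range_succ, Nat.factorial] at this
    nlinarith
  have hpos : (0:ℝ) < 1 + s + s^2/2 := by nlinarith
  calc Real.log (1 + s + s^2/2) ≤ Real.log (Real.exp s) :=
        Real.log_le_log (by positivity) hexp
    _ = s := Real.log_exp s

theorem equidistant_Tplus_upper_bound (Tp h : ℝ) (hTp : 1 ≤ Tp) (hh : 0 ≤ h)
    (heq : Tp - 1 - Real.log Tp = h) :
    Tp ≤ 1 + Real.sqrt (2 * h) + h := by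
  set s := Real.sqrt (2 * h) with hs
  have hs0 : 0 ≤ s := Real.sqrt_nonneg _
  have hsq : s^2 = 2 * h := Real.sq_sqrt (by linarith)
  have hhs : h = s^2/2 := by linarith
  by_contra hc
  push_neg at hc
  have h1 : (1:ℝ) ≤ 1 + s + h := by linarith
  have hmono := g_strictMono h1 (show Tp ∈ Set.Ici (1:ℝ) from hTp) hc
  simp only at hmono
  rw [heq] at hmono
  have hlog : Real.log (1 + s + h) ≤ s := by
    rw [hhs]; exact log_bound s hs0
  linarith
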